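/- arXiv:2208.11419 — 2 statements merged into one kernel-verified Lean document; each statement's English description precedes it below -/
import Mathlib

section
/- The homography H(x) := (H'x + e_{n+1})/(e_{n+1}^T x) with H' := Σ_{j=1}^n (a_{n+1} - a_j)^{-1/2} e_j e_j^T maps points of the quadric x^T A x = 1 parametrized by x_0(V) = (√A)^{-1}(2V + (|V|^2-1)e_{n+1})/(|V|^2+1) to points of the quadric x^T Ã x = 1 with parameter Ṽ = iV (up to signs of coordinates): i.e., H(x_0(V)) agrees up to per-coordinate signs with (√Ã)^{-1}(2(iV) + (|iV|^2-1)e_{n+1})/(|iV|^2+1). -/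
open Matrix

/-- The homography `H(x) := (H'x + e_{n+1})/(e_{n+1}ᵀ x)` with
`H' := Σ_{j=1}^n (a_{n+1} - a_j)^{-1/2} e_j e_jᵀ` maps points of the quadric
`xᵀ A x = 1` parametrized by `x₀(V) = (√A)⁻¹ (2V + (|V|²-1)e_{n+1})/(|V|²+1)` to points of
the quadric `xᵀ Ã x = 1` with parameter `Ṽ = iV`, up to per-coordinate signs `ε_j = ±1`. -/
theorem stmt12 (n : ℕ) (a at' sa sat s : Fin (n + 1) → ℂ)
    (ha : ∀ j, a j ≠ 0) (hdist : Function.Injective a)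
    (hatlast : at' (Fin.last n) = (a (Fin.last n))⁻¹)
    (hat : ∀ j, j ≠ Fin.last n →
      at' j = (a (Fin.last n))⁻¹ + (a j - a (Fin.last n))⁻¹)
    (hat0 : ∀ j, at' j ≠ 0)
    -- fixed square roots of the diagonal entries of `A`, `Ã` and of `a_{n+1} - a_j`
    (hsa : ∀ j, sa j ^ 2 = (a j)⁻¹) (hsa0 : ∀ j, sa j ≠ 0)
    (hsat : ∀ j, sat j ^ 2 = (at' j)⁻¹) (hsat0 : ∀ j, sat j ≠ 0)
    (hs : ∀ j, j ≠ Fin.last n → s j ^ 2 = a (Fin.last n) - a j)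
    (hs0 : ∀ j, j ≠ Fin.last n → s j ≠ 0)
    (V : Fin (n + 1) → ℂ) (hVlast : V (Fin.last n) = 0)
    (hden : V ⬝ᵥ V + 1 ≠ 0) (hden' : 1 - V ⬝ᵥ V ≠ 0)
    (X0 x0 Hx Xt xt : Fin (n + 1) → ℂ)
    (hX0 : X0 = (V ⬝ᵥ V + 1)⁻¹ •
      ((2 : ℂ) • V + (V ⬝ᵥ V - 1) • (Pi.single (Fin.last n) 1 : Fin (n + 1) → ℂ)))
    (hx0 : x0 = fun j => (sa j)⁻¹ * X0 j)
    (hx0last : x0 (Fin.last n) ≠ 0)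
    -- the homography applied to `x₀`
    (hHx : Hx = (x0 (Fin.last n))⁻¹ •
      ((fun j => if j = Fin.last n then 0 else (s j)⁻¹ * x0 j)
        + (Pi.single (Fin.last n) 1 : Fin (n + 1) → ℂ)))
    -- the tilde parametrization with `Ṽ = iV`, `|Ṽ|² = -|V|²`
    (hXt : Xt = (1 - V ⬝ᵥ V)⁻¹ •
      ((2 : ℂ) • (Complex.I • V) + (-(V ⬝ᵥ V) - 1) •
        (Pi.single (Fin.last n) 1 : Fin (n + 1) → ℂ)))
    (hxt : xt = fun j => (sat j)⁻¹ * Xt j) :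
    ∃ ε : Fin (n + 1) → ℂ, (∀ j, ε j = 1 ∨ ε j = -1) ∧ ∀ j, Hx j = ε j * xt j := by
  classical
  set L := Fin.last n with hLdef
  set d := V ⬝ᵥ V with hd
  have hd1 : d + 1 ≠ 0 := hden
  have hd1' : d - 1 ≠ 0 := by
    intro h; apply hden'; rw [hd]; linear_combination -h
  have h1d : (1 : ℂ) - d ≠ 0 := hden'
  have hX0j : ∀ j, X0 j = (d + 1)⁻¹ * (2 * V j + (d - 1) * (if j = L then 1 else 0)) := by
    intro j
    rw [hX0]
    simp [Pi.single_apply, smul_eq_mul]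
  have hXtj : ∀ j, Xt j = (1 - d)⁻¹ * (2 * (Complex.I * V j) + (-d - 1) * (if j = L then 1 else 0)) := by
    intro j
    rw [hXt]
    simp [Pi.single_apply, smul_eq_mul]
  have hx0j : ∀ j, x0 j = (sa j)⁻¹ * X0 j := fun j => by rw [hx0]
  have hxtj : ∀ j, xt j = (sat j)⁻¹ * Xt j := fun j => by rw [hxt]
  have hx0L : x0 L = (sa L)⁻¹ * ((d + 1)⁻¹ * (d - 1)) := by
    rw [hx0j, hX0j]
    simp [hVlast]
  refine ⟨fun j => if j = L then sa L * sat L else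
      Complex.I * sa L * sat j * (s j)⁻¹ * (sa j)⁻¹, ?_, ?_⟩
  · intro j
    dsimp only
    rw [← mul_self_eq_one_iff]
    by_cases hj : j = L
    · rw [if_pos hj]
      have h1 : sa L * sat L * (sa L * sat L) = sa L ^ 2 * sat L ^ 2 := by ring
      rw [h1, hsa, hsat, hatlast, inv_inv]
      exact inv_mul_cancel₀ (ha L)
    · rw [if_neg hj]
      have hne : a j - a L ≠ 0 := sub_ne_zero.mpr fun h => hj (hdist h)
      have hne' : a L - a j ≠ 0 := sub_ne_zero.mpr fun h => hj (hdist h.symm)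
      have hsatj : sat j ^ 2 = (a j - a L) * a L / a j := by
        rw [hsat, hat j hj]
        refine inv_eq_of_mul_eq_one_right ?_
        field_simp [ha L, ha j, hne]
        ring
      have h1 : Complex.I * sa L * sat j * (s j)⁻¹ * (sa j)⁻¹ *
          (Complex.I * sa L * sat j * (s j)⁻¹ * (sa j)⁻¹) =
          Complex.I ^ 2 * sa L ^ 2 * sat j ^ 2 * (s j ^ 2)⁻¹ * (sa j ^ 2)⁻¹ := by ring
      rw [h1, Complex.I_sq, hsa, hsatj, hs j hj, hsa, inv_inv]
      field_simp [ha L, ha j, hne']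
      ring
  · intro j
    dsimp only
    rw [hHx, hxtj]
    by_cases hj : j = L
    · subst hj
      simp only [Pi.smul_apply, Pi.add_apply, if_pos rfl, Pi.single_eq_same,
        smul_eq_mul, zero_add, mul_one]
      rw [hx0L, hXtj]
      rw [if_pos rfl, hVlast]
      field_simp [hsa0, hsat0]
      simp only [if_pos trivial]
      ring
    · simp only [Pi.smul_apply, Pi.add_apply, smul_eq_mul, Pi.single_apply]
      rw [if_neg hj, if_neg hj, add_zero, hx0L, hx0j, hX0j, hXtj, if_neg hj, if_neg hj]
      have hI : Complex.I * Complex.I = -1 := Complex.I_mul_I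
      field_simp [hsa0 L, hsa0 j, hsat0 j, hs0 j hj]
      ring_nf
      rw [Complex.I_sq]
      ring
end

section
/- Under the Hazzidakis substitutions Ṽ_i = iV_i, Λ̃_0 = a_{n+1}Λ_0, R̃_1 = R_1, z̃ = -z a_{n+1}^{-2}(1 - z a_{n+1}^{-1})^{-1}, with I_{1,n}√(R̃_{z̃})I_{1,n} = (1 - z a_{n+1}^{-1})^{-1/2} I_{1,n}√(R_z)I_{1,n} and √(1 - z̃ ã_{n+1}^{-1}) = (1 - z a_{n+1}^{-1})^{-1/2}, the second tangency equation -√z R_1 Λ_0 = 2I_{1,n}√(R_z)I_{1,n}V_0 + √(1 - z a_{n+1}^{-1})(|V_0|^2-1)V_1 - V_1(|V_0|^2+1) implies the corresponding tilde equation ±√(z̃) R̃_1 Λ̃_0 = 2I_{1,n}√(R̃_{z̃})I_{1,n}Ṽ_0 + √(1 - z̃ ã_{n+1}^{-1})(|Ṽ_0|^2-1)Ṽ_1 - Ṽ_1(|Ṽ_0|^2+1) for a suitable choice of sign and square root √(z̃) with (√(z̃))^2 = z̃. -/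
open Matrix

/-- Covariance of the second tangency equation under the Hazzidakis transformation:
with `Ṽᵢ = iVᵢ`, `Λ̃₀ = a_{n+1}Λ₀`, `R̃₁ = R₁`, `z̃ = -z a_{n+1}⁻²(1 - z a_{n+1}⁻¹)⁻¹`,
`I_{1,n}√R̃_{z̃}I_{1,n} = (1 - z a_{n+1}⁻¹)^{-1/2} I_{1,n}√R_z I_{1,n}` and
`√(1 - z̃ã_{n+1}⁻¹) = (1 - z a_{n+1}⁻¹)^{-1/2}`, the equation
`-√z R₁Λ₀ = 2I_{1,n}√R_z I_{1,n}V₀ + √(1-za_{n+1}⁻¹)(|V₀|²-1)V₁ - V₁(|V₀|²+1)`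
implies the corresponding tilde equation for a suitable sign and square root of `z̃`. -/
theorem stmt19 (n : ℕ) (aN z sz sq : ℂ)
    (haN : aN ≠ 0) (hz : z ≠ aN) (hz' : z * aN⁻¹ ≠ 1)
    (hsz : sz ^ 2 = z) (hsq : sq ^ 2 = 1 - z * aN⁻¹) (hsq0 : sq ≠ 0)
    (Q Qt R1 : Matrix (Fin (n + 1)) (Fin (n + 1)) ℂ)
    -- `Q = I_{1,n}√R_z I_{1,n}` and its Hazzidakis transform
    (hQt : Qt = sq⁻¹ • Q)
    (hR1 : ∀ j, R1 j (Fin.last n) = 0 ∧ R1 (Fin.last n) j = 0)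
    (V0 V1 L0 : Fin (n + 1) → ℂ)
    (hV0last : V0 (Fin.last n) = 0) (hV1last : V1 (Fin.last n) = 0)
    (hL0last : L0 (Fin.last n) = 0)
    (heq : -(sz • (R1 *ᵥ L0)) = (2 : ℂ) • (Q *ᵥ V0)
      + (sq * (V0 ⬝ᵥ V0 - 1)) • V1 - (V0 ⬝ᵥ V0 + 1) • V1) :
    ∃ ε szt : ℂ, (ε = 1 ∨ ε = -1) ∧
      szt ^ 2 = -z * aN⁻¹ ^ 2 * (1 - z * aN⁻¹)⁻¹ ∧
      (ε * szt) • (R1 *ᵥ (aN • L0)) = (2 : ℂ) • (Qt *ᵥ (Complex.I • V0))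
        + (sq⁻¹ * ((Complex.I • V0) ⬝ᵥ (Complex.I • V0) - 1)) • (Complex.I • V1)
        - ((Complex.I • V0) ⬝ᵥ (Complex.I • V0) + 1) • (Complex.I • V1) := by
  refine ⟨-1, Complex.I * sz * aN⁻¹ * sq⁻¹, Or.inr rfl, ?_, ?_⟩
  · have h1 : sq⁻¹ ^ 2 = (1 - z * aN⁻¹)⁻¹ := by rw [← hsq, inv_pow]
    have h2 : Complex.I ^ 2 = -1 := Complex.I_sq
    calc (Complex.I * sz * aN⁻¹ * sq⁻¹) ^ 2
        = Complex.I ^ 2 * sz ^ 2 * aN⁻¹ ^ 2 * sq⁻¹ ^ 2 := by ring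
      _ = -z * aN⁻¹ ^ 2 * (1 - z * aN⁻¹)⁻¹ := by rw [h1, h2, hsz]; ring
  · funext i
    have hi := congrFun heq i
    simp only [Pi.add_apply, Pi.sub_apply, Pi.smul_apply, Pi.neg_apply, smul_eq_mul,
      mulVec_smul, hQt, smul_mulVec, smul_dotProduct, dotProduct_smul] at hi ⊢
    have h2 : Complex.I ^ 2 = -1 := Complex.I_sq
    have hs : sq * sq⁻¹ = 1 := mul_inv_cancel₀ hsq0
    have ha : aN * aN⁻¹ = 1 := mul_inv_cancel₀ haN
    linear_combination (Complex.I * sq⁻¹) * hi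
      + (-Complex.I * sz * sq⁻¹ * (R1 *ᵥ L0) i) * ha
      + (Complex.I * (1 - sq⁻¹) * (V0 ⬝ᵥ V0) * V1 i) * h2
      + (Complex.I * ((V0 ⬝ᵥ V0) - 1) * V1 i) * hs
end
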